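/- Let f be a function from finite bit strings to Bool and let B : ℕ → Bool. Define Z : ℕ → Bool recursively by Z(2n) = B(n) and Z(2n+1) = f(Z↾(2n+1)). Let L be a martingale that does not bet at any odd position, i.e., L(x0) = L(x1) for every string x of odd length. Then there exists a martingale N such that N(B↾(n+1)) = L(Z↾(2n+2)) for every n; in particular, if L succeeds on Z then N succeeds on B. Moreover, if f and L are computable, then N can be chosen computable. -/

import Mathlib

set_option maxHeartbeats 1000000

open Filter

section Aux

variable (f : List Bool → Bool)

def tmStep (acc : List Bool) (b : Bool) : List Bool :=
  (acc ++ [b]) ++ [f (acc ++ [b])]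

def tmG (y : List Bool) : List Bool := y.foldl (tmStep f) []

lemma tmG_concat (y : List Bool) (b : Bool) :
    tmG f (y ++ [b]) = tmStep f (tmG f y) b := by
  simp [tmG, List.foldl_append]

lemma tmG_length (y : List Bool) : (tmG f y).length = 2 * y.length := by
  induction y using List.reverseRecOn with
  | nil => simp [tmG]
  | append_singleton y b ih =>
      rw [tmG_concat]
      simp [tmStep, ih]; ring

lemma tmG_take (y : List Bool) (n : ℕ) :
    (y.take (n+1)).foldl (tmStep f) [] =
      Option.casesOn (y[n]?) ((y.take n).foldl (tmStep f) [])
        (fun b => tmStep f ((y.take n).foldl (tmStep f) []) b) := by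
  rw [List.take_succ]
  cases h : y[n]? <;> simp [h, List.foldl_append]

lemma tmStep_computable (hf : Computable f) : Computable₂ (tmStep f) := by
  have hu : Computable fun p : List Bool × Bool => p.1 ++ [p.2] :=
    Computable.list_concat.comp Computable.fst Computable.snd
  exact Computable.list_concat.comp hu (hf.comp hu)

lemma tmG_computable (hf : Computable f) : Computable (tmG f) := by
  have hG : Computable₂ fun (y : List Bool) (n : ℕ) =>
      (y.take n).foldl (tmStep f) [] := by
    have := Computable.nat_rec (α := List Bool × ℕ) (σ := List Bool)
      (f := fun p => p.2) (g := fun _ => ([] : List Bool))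
      (h := fun p q => Option.casesOn (p.1[q.1]?) q.2
        (fun b => tmStep f q.2 b))
      Computable.snd (Computable.const [])
      (Computable.option_casesOn
        (Computable.list_getElem?.comp (Computable.fst.comp Computable.fst)
          (Computable.fst.comp Computable.snd))
        (Computable.snd.comp Computable.snd)
        (((tmStep_computable f hf).comp
          ((Computable.snd.comp Computable.snd).comp Computable.fst)
          Computable.snd).to₂))
    refine this.of_eq ?_
    rintro ⟨y, n⟩
    induction n with
    | zero => simp
    | succ n ih => simp only [ih, ← tmG_take]
  have : Computable fun y : List Bool => (y.take y.length).foldl (tmStep f) [] :=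
    hG.comp Computable.id Computable.list_length
  refine this.of_eq fun y => ?_
  simp [tmG]

end Aux


open Filter

/-- The finite bit string consisting of the first `n` bits of the sequence `Z`. -/
def seqTake (Z : ℕ → Bool) (n : ℕ) : List Bool :=
  List.ofFn fun i : Fin n => Z i

/-- A martingale is a positive rational-valued function on bit strings
satisfying the fairness condition `M x = (M x0 + M x1)/2`. -/
def IsMartingale (M : List Bool → ℚ) : Prop :=
  ∀ x : List Bool, 0 < M x ∧ M x = (M (x ++ [false]) + M (x ++ [true])) / 2

/-- `M` succeeds on `Z` if `limsup_n M (Z↾n) = ∞`. -/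
def Succeeds (M : List Bool → ℚ) (Z : ℕ → Bool) : Prop :=
  ∀ c : ℚ, ∃ᶠ n in atTop, c < M (seqTake Z n)

/-- `Z` is computably random if no computable martingale succeeds on it. -/
def ComputablyRandom (Z : ℕ → Bool) : Prop :=
  ∀ M : List Bool → ℚ, Computable M → IsMartingale M → ¬ Succeeds M Z

/-- The martingale `M` does not bet at position `n`:
`M (x0) = M (x1)` for every string `x` of length `n`. -/
def NoBetAt (M : List Bool → ℚ) (n : ℕ) : Prop :=
  ∀ x : List Bool, x.length = n → M (x ++ [false]) = M (x ++ [true])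

/-- If the odd bits of `Z` are computed by `f` from the preceding bits and the even bits
copy `B`, then any martingale `L` betting only on even positions transfers to a
martingale `N` on `B` with `N (B↾(n+1)) = L (Z↾(2n+2))`; in particular if `L` succeeds
on `Z` then `N` succeeds on `B`, and `N` is computable whenever `f` and `L` are. -/

lemma seqTake_succ (Z : ℕ → Bool) (n : ℕ) :
    seqTake Z (n + 1) = seqTake Z n ++ [Z n] := by
  rw [seqTake, List.ofFn_succ']
  simp [seqTake, List.concat_eq_append]

theorem transfer_martingale_to_even_bits (f : List Bool → Bool) (B : ℕ → Bool)
    (Z : ℕ → Bool)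
    (hZeven : ∀ n : ℕ, Z (2 * n) = B n)
    (hZodd : ∀ n : ℕ, Z (2 * n + 1) = f (seqTake Z (2 * n + 1)))
    (L : List Bool → ℚ) (hL : IsMartingale L)
    (hnb : ∀ n : ℕ, Odd n → NoBetAt L n) :
    ∃ N : List Bool → ℚ, IsMartingale N ∧
      (∀ n : ℕ, N (seqTake B (n + 1)) = L (seqTake Z (2 * n + 2))) ∧
      (Succeeds L Z → Succeeds N B) ∧
      (Computable f → Computable L → Computable N) := by
  have hodd : ∀ (x : List Bool) (c : Bool), Odd x.length → L (x ++ [c]) = L x := by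
    intro x c hx
    have h1 : L (x ++ [false]) = L (x ++ [true]) := hnb x.length hx x rfl
    have h2 := (hL x).2
    rw [← h1] at h2
    have h3 : L x = L (x ++ [false]) := by rw [h2]; ring
    cases c
    · exact h3.symm
    · rw [← h1]; exact h3.symm
  have hgB : ∀ n : ℕ, tmG f (seqTake B n) = seqTake Z (2 * n) := by
    intro n
    induction n with
    | zero => simp [tmG, seqTake]
    | succ n ih =>
        rw [seqTake_succ, tmG_concat, ih]
        have e1 : 2 * (n + 1) = (2 * n + 1) + 1 := by ring
        have e2 : seqTake Z (2 * n + 1) = seqTake Z (2 * n) ++ [B n] := by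
          rw [seqTake_succ, hZeven]
        rw [e1, seqTake_succ, hZodd, e2, tmStep]
  refine ⟨fun y => L (tmG f y), ?_, ?_, ?_, ?_⟩
  · intro y
    dsimp only
    refine ⟨(hL _).1, ?_⟩
    have key : ∀ b : Bool, L (tmG f (y ++ [b])) = L (tmG f y ++ [b]) := by
      intro b
      rw [tmG_concat, tmStep]
      refine hodd _ _ ?_
      rw [List.length_append, tmG_length]
      exact ⟨y.length, by simp [Nat.mul_comm]⟩
    rw [key, key]
    exact (hL (tmG f y)).2
  · intro n
    dsimp only
    rw [hgB (n + 1)]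
    have : 2 * (n + 1) = 2 * n + 2 := by ring
    rw [this]
  · intro hS c
    rw [frequently_atTop]
    intro M
    obtain ⟨n, hn, hcn⟩ := (frequently_atTop.mp (hS c)) (2 * M + 1)
    have hL2 : ∀ k : ℕ, L (seqTake Z (2 * k + 2)) = L (seqTake Z (2 * k + 1)) := by
      intro k
      have e : (2 : ℕ) * k + 2 = (2 * k + 1) + 1 := by ring
      rw [e, seqTake_succ]
      refine hodd _ _ ?_
      rw [show (seqTake Z (2 * k + 1)).length = 2 * k + 1 from by simp [seqTake]]
      exact ⟨k, by ring⟩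
    rcases Nat.even_or_odd n with ⟨k, hk⟩ | ⟨k, hk⟩
    · refine ⟨k, by omega, ?_⟩
      dsimp only
      rw [hgB k, show 2 * k = n from by omega]
      exact hcn
    · refine ⟨k + 1, by omega, ?_⟩
      dsimp only
      rw [hgB (k + 1)]
      have e : 2 * (k + 1) = 2 * k + 2 := by ring
      rw [e, hL2, ← hk]
      exact hcn
  · intro hf hLc
    exact hLc.comp (tmG_computable f hf)
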